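/- Let P be the uniform probability distribution on the discrete hypercube {−1, 1}^d, and for each subset S ⊆ {1, …, d} with |S| = k let χ_S : {−1, 1}^d → ℝ be the parity function χ_S(x) = ∏_{j ∈ S} x_j. Let W be a finite-dimensional subspace of L²(P) such that (1/C(d,k)) · Σ_{S : |S| = k} inf_{g ∈ W} ‖g − χ_S‖²_{L²(P)} ≤ ε, where C(d,k) is the binomial coefficient d-choose-k. Then dim(W) ≥ (1 − ε) · C(d,k). -/

import Mathlib

open Finset MeasureTheory
open scoped RealInnerProductSpace

/-- The sign group `ℤˣ = {1, -1}` models the two-point set `{-1, 1}`. -/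
noncomputable instance : MeasurableSpace ℤˣ := ⊤

instance : MeasurableSingletonClass ℤˣ := ⟨fun _ => MeasurableSpace.measurableSet_top⟩

lemma sum_units_int' (F : ℤˣ → ℝ) : ∑ v : ℤˣ, F v = F 1 + F (-1) := by
  have h : (Finset.univ : Finset ℤˣ) = {1, -1} := by
    ext v
    simp only [Finset.mem_univ, true_iff, Finset.mem_insert, Finset.mem_singleton]
    exact Int.units_eq_one_or v
  rw [h, Finset.sum_insert (by decide), Finset.sum_singleton]

lemma parity_sum' (d : ℕ) (S T : Finset (Fin d)) :
    ∑ x : Fin d → ℤˣ, (∏ j ∈ S, ((x j : ℤ) : ℝ)) * ∏ j ∈ T, ((x j : ℤ) : ℝ)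
      = if S = T then (Fintype.card (Fin d → ℤˣ) : ℝ) else 0 := by
  have key : ∀ x : Fin d → ℤˣ,
      (∏ j ∈ S, ((x j : ℤ) : ℝ)) * ∏ j ∈ T, ((x j : ℤ) : ℝ)
      = ∏ j : Fin d, ((if j ∈ S then ((x j : ℤ) : ℝ) else 1) *
          (if j ∈ T then ((x j : ℤ) : ℝ) else 1)) := by
    intro x
    rw [Finset.prod_mul_distrib, Finset.prod_ite_mem, Finset.prod_ite_mem,
      Finset.univ_inter, Finset.univ_inter]
  simp only [key]
  have swap : ∑ x : Fin d → ℤˣ, ∏ j : Fin d, ((if j ∈ S then ((x j : ℤ) : ℝ) else 1) *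
          (if j ∈ T then ((x j : ℤ) : ℝ) else 1))
      = ∏ j : Fin d, ∑ v : ℤˣ, ((if j ∈ S then ((v : ℤ) : ℝ) else 1) *
          (if j ∈ T then ((v : ℤ) : ℝ) else 1)) := by
    rw [Finset.prod_univ_sum]
    rw [← Fintype.piFinset_univ]
  rw [swap]
  have hval : ∀ j : Fin d, ∑ v : ℤˣ, ((if j ∈ S then ((v : ℤ) : ℝ) else 1) *
          (if j ∈ T then ((v : ℤ) : ℝ) else 1))
      = if (j ∈ S ↔ j ∈ T) then 2 else 0 := by
    intro j
    rw [sum_units_int']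
    by_cases hS : j ∈ S <;> by_cases hT : j ∈ T <;> simp [hS, hT] <;> norm_num
  simp only [hval]
  by_cases h : S = T
  · subst h
    simp only [iff_self, if_true, Finset.prod_const, if_pos rfl]
    simp [Fintype.card_fun]
  · rw [if_neg h]
    have : ∃ j : Fin d, ¬ (j ∈ S ↔ j ∈ T) := by
      by_contra hc
      push_neg at hc
      exact h (Finset.ext fun j => by have := hc j; tauto)
    obtain ⟨j, hj⟩ := this
    exact Finset.prod_eq_zero (Finset.mem_univ j) (by rw [if_neg hj])

/-- key geometric fact: squared distance to any element of `K` is at least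
`‖v‖² - ‖proj_K v‖²`. -/
lemma dist_sq_ge' {E : Type*} [NormedAddCommGroup E] [InnerProductSpace ℝ E]
    (K : Submodule ℝ E) [K.HasOrthogonalProjection] (v : E) (g : K) :
    ‖v‖ ^ 2 - ‖(K.orthogonalProjectionOnto v : E)‖ ^ 2 ≤ ‖(g : E) - v‖ ^ 2 := by
  have hmemq : (K.orthogonalProjectionOnto v : E) ∈ K := (K.orthogonalProjectionOnto v).2
  set q : E := (K.orthogonalProjectionOnto v : E) with hq
  have horth : ∀ w ∈ K, ⟪v - q, w⟫ = 0 := fun w hw => K.starProjection_inner_eq_zero v w hw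
  have h0 : ⟪q, v - q⟫ = 0 := by rw [real_inner_comm]; exact horth q hmemq
  have e1 : q + (v - q) = v := by abel
  have hpyth : ‖v‖ ^ 2 = ‖q‖ ^ 2 + ‖v - q‖ ^ 2 := by
    have h := norm_add_sq_real q (v - q)
    rw [e1, h0] at h
    linarith
  have hmem : (g : E) - q ∈ K := sub_mem g.2 hmemq
  have h1 : ⟪(g : E) - q, q - v⟫ = 0 := by
    have h2 := horth _ hmem
    rw [real_inner_comm] at h2
    rw [show q - v = -(v - q) from (neg_sub v q).symm, inner_neg_right, h2, neg_zero]
  have e2 : ((g : E) - q) + (q - v) = (g : E) - v := by abel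
  have hgv : ‖(g : E) - v‖ ^ 2 = ‖(g : E) - q‖ ^ 2 + ‖q - v‖ ^ 2 := by
    have h := norm_add_sq_real ((g : E) - q) (q - v)
    rw [e2, h1] at h
    linarith
  rw [norm_sub_rev q v] at hgv
  nlinarith [sq_nonneg ‖(g : E) - q‖]

set_option maxHeartbeats 2000000 in
/-- **Lower bound for linear methods approximating `k`-sparse parity functions.**
Let `P` be the uniform probability distribution on the hypercube `{-1,1}^d`
(modeled as `Fin d → ℤˣ`), and for `S ⊆ {1,…,d}` with `|S| = k` let
`χ S ∈ L²(P)` be the parity function `x ↦ ∏_{j ∈ S} x j`.  If `W` is a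
finite-dimensional subspace of `L²(P)` with
`(1/C(d,k)) ∑_{|S| = k} inf_{g ∈ W} ‖g - χ S‖² ≤ ε`, then
`dim W ≥ (1 - ε) C(d,k)`. -/
theorem sparse_parity_dimension_lower_bound
    (d k : ℕ) (P : Measure (Fin d → ℤˣ))
    (hP : P = (PMF.uniformOfFintype (Fin d → ℤˣ)).toMeasure)
    (χ : Finset (Fin d) → Lp ℝ 2 P)
    (hχ : ∀ S ∈ Finset.powersetCard k (univ : Finset (Fin d)),
      (χ S : (Fin d → ℤˣ) → ℝ) =ᵐ[P] fun x => ∏ j ∈ S, ((x j : ℤ) : ℝ))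
    (W : Submodule ℝ (Lp ℝ 2 P)) [FiniteDimensional ℝ W]
    (ε : ℝ)
    (hε : (1 / (Nat.choose d k : ℝ)) *
        ∑ S ∈ Finset.powersetCard k (univ : Finset (Fin d)),
          ⨅ g : W, ‖(g : Lp ℝ 2 P) - χ S‖ ^ 2 ≤ ε) :
    (Module.finrank ℝ W : ℝ) ≥ (1 - ε) * (Nat.choose d k : ℝ) := by
  haveI : IsProbabilityMeasure P := hP ▸ inferInstance
  set 𝒮 := Finset.powersetCard k (univ : Finset (Fin d)) with h𝒮
  -- inner products of the parity functions
  have hinner : ∀ S ∈ 𝒮, ∀ T ∈ 𝒮, ⟪χ S, χ T⟫ = if S = T then (1 : ℝ) else 0 := by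
    intro S hS T hT
    rw [MeasureTheory.L2.inner_def]
    have h1 : (fun a => ⟪(χ S : (Fin d → ℤˣ) → ℝ) a, (χ T : (Fin d → ℤˣ) → ℝ) a⟫)
        =ᵐ[P] fun x => (∏ j ∈ S, ((x j : ℤ) : ℝ)) * ∏ j ∈ T, ((x j : ℤ) : ℝ) := by
      filter_upwards [hχ S hS, hχ T hT] with x e1 e2
      simp [RCLike.inner_apply, conj_trivial, e1, e2]
      exact mul_comm _ _
    rw [integral_congr_ae h1, hP, PMF.integral_eq_sum]
    simp only [PMF.uniformOfFintype_apply, smul_eq_mul]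
    rw [← Finset.mul_sum, parity_sum' d S T]
    have hcard : (0 : ℝ) < (Fintype.card (Fin d → ℤˣ) : ℝ) := by
      exact_mod_cast Fintype.card_pos
    by_cases h : S = T
    · rw [if_pos h, if_pos h]
      rw [ENNReal.toReal_inv, ENNReal.toReal_natCast]
      field_simp
    · rw [if_neg h, if_neg h, mul_zero]
  -- the parity functions form an orthonormal family
  have horth : Orthonormal ℝ (fun S : {S // S ∈ 𝒮} => χ S.val) := by
    rw [orthonormal_iff_ite]
    intro i j
    rw [hinner i.1 i.2 j.1 j.2]
    by_cases h : i = j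
    · simp [h]
    · rw [if_neg (fun hv => h (Subtype.ext hv)), if_neg h]
  have hχnorm : ∀ S ∈ 𝒮, ‖χ S‖ ^ 2 = 1 := by
    intro S hS
    rw [← real_inner_self_eq_norm_sq, hinner S hS S hS, if_pos rfl]
  -- orthonormal basis of W
  haveI : CompleteSpace W := FiniteDimensional.complete ℝ W
  set m := Module.finrank ℝ W with hm
  set b := stdOrthonormalBasis ℝ W with hb
  -- norm of the projection
  have hproj : ∀ v : Lp ℝ 2 P,
      ‖((W.orthogonalProjectionOnto v : W) : Lp ℝ 2 P)‖ ^ 2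
        = ∑ i : Fin m, ⟪((b i : W) : Lp ℝ 2 P), v⟫ ^ 2 := by
    intro v
    have hsum : (W.orthogonalProjectionOnto v : W)
        = ∑ i : Fin m, ⟪((b i : W) : Lp ℝ 2 P), v⟫ • b i := b.orthogonalProjectionOnto_apply_eq_sum v
    have h2 : ‖(W.orthogonalProjectionOnto v : W)‖ ^ 2
        = ⟪(W.orthogonalProjectionOnto v : W), (W.orthogonalProjectionOnto v : W)⟫ :=
      (real_inner_self_eq_norm_sq _).symm
    have h3 : ⟪(W.orthogonalProjectionOnto v : W), (W.orthogonalProjectionOnto v : W)⟫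
        = ∑ i : Fin m, ⟪((b i : W) : Lp ℝ 2 P), v⟫ ^ 2 := by
      rw [hsum, b.orthonormal.inner_sum]
      exact Finset.sum_congr rfl fun i _ => by rw [conj_trivial, sq]
    have h1 : ‖((W.orthogonalProjectionOnto v : W) : Lp ℝ 2 P)‖
        = ‖(W.orthogonalProjectionOnto v : W)‖ := rfl
    rw [h1, h2, h3]
  -- lower bound for each infimum
  have hinf : ∀ S ∈ 𝒮,
      1 - ∑ i : Fin m, ⟪((b i : W) : Lp ℝ 2 P), χ S⟫ ^ 2
        ≤ ⨅ g : W, ‖(g : Lp ℝ 2 P) - χ S‖ ^ 2 := by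
    intro S hS
    apply le_ciInf
    intro g
    have h1 := dist_sq_ge' W (χ S) g
    rw [hproj (χ S)] at h1
    rw [hχnorm S hS] at h1
    exact h1
  -- Bessel's inequality for each basis vector
  have hbessel : ∀ i : Fin m,
      ∑ S ∈ 𝒮, ⟪((b i : W) : Lp ℝ 2 P), χ S⟫ ^ 2 ≤ 1 := by
    intro i
    have h1 := horth.sum_inner_products_le (s := (Finset.univ : Finset {S // S ∈ 𝒮}))
      (((b i : W) : Lp ℝ 2 P))
    have h2 : ‖((b i : W) : Lp ℝ 2 P)‖ ^ 2 = 1 := by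
      have : ‖((b i : W) : Lp ℝ 2 P)‖ = ‖b i‖ := rfl
      rw [this, b.orthonormal.1 i, one_pow]
    rw [h2] at h1
    calc ∑ S ∈ 𝒮, ⟪((b i : W) : Lp ℝ 2 P), χ S⟫ ^ 2
        = ∑ S : {S // S ∈ 𝒮}, ⟪((b i : W) : Lp ℝ 2 P), χ S.val⟫ ^ 2 :=
          (Finset.sum_coe_sort 𝒮 (fun S => ⟪((b i : W) : Lp ℝ 2 P), χ S⟫ ^ 2)).symm
      _ ≤ 1 := by
          refine le_trans (le_of_eq ?_) h1
          refine Finset.sum_congr rfl fun S _ => ?_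
          rw [real_inner_comm, Real.norm_eq_abs, sq_abs]
  -- sum over all parities
  have hsum : (𝒮.card : ℝ) - (m : ℝ)
      ≤ ∑ S ∈ 𝒮, ⨅ g : W, ‖(g : Lp ℝ 2 P) - χ S‖ ^ 2 := by
    have h1 : ∑ S ∈ 𝒮, (1 - ∑ i : Fin m, ⟪((b i : W) : Lp ℝ 2 P), χ S⟫ ^ 2)
        ≤ ∑ S ∈ 𝒮, ⨅ g : W, ‖(g : Lp ℝ 2 P) - χ S‖ ^ 2 :=
      Finset.sum_le_sum fun S hS => hinf S hS
    have h2 : ∑ S ∈ 𝒮, (1 - ∑ i : Fin m, ⟪((b i : W) : Lp ℝ 2 P), χ S⟫ ^ 2)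
        = (𝒮.card : ℝ) - ∑ i : Fin m, ∑ S ∈ 𝒮, ⟪((b i : W) : Lp ℝ 2 P), χ S⟫ ^ 2 := by
      rw [Finset.sum_sub_distrib, Finset.sum_const, nsmul_eq_mul, mul_one,
        Finset.sum_comm]
    have h3 : ∑ i : Fin m, ∑ S ∈ 𝒮, ⟪((b i : W) : Lp ℝ 2 P), χ S⟫ ^ 2 ≤ (m : ℝ) := by
      calc ∑ i : Fin m, ∑ S ∈ 𝒮, ⟪((b i : W) : Lp ℝ 2 P), χ S⟫ ^ 2
          ≤ ∑ _i : Fin m, (1 : ℝ) := Finset.sum_le_sum fun i _ => hbessel i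
        _ = (m : ℝ) := by simp
    linarith
  -- conclude
  have hcard𝒮 : (𝒮.card : ℝ) = (Nat.choose d k : ℝ) := by
    rw [h𝒮, Finset.card_powersetCard, Finset.card_univ, Fintype.card_fin]
  rw [hcard𝒮] at hsum
  by_cases hN : (Nat.choose d k : ℝ) = 0
  · rw [hN, mul_zero]
    exact_mod_cast Nat.zero_le m
  · have hNpos : (0 : ℝ) < (Nat.choose d k : ℝ) := lt_of_le_of_ne (Nat.cast_nonneg _) (Ne.symm hN)
    have h4 : ∑ S ∈ 𝒮, ⨅ g : W, ‖(g : Lp ℝ 2 P) - χ S‖ ^ 2 ≤ ε * (Nat.choose d k : ℝ) := by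
      rw [one_div] at hε
      calc ∑ S ∈ 𝒮, ⨅ g : W, ‖(g : Lp ℝ 2 P) - χ S‖ ^ 2
          = ((Nat.choose d k : ℝ)⁻¹ * ∑ S ∈ 𝒮, ⨅ g : W, ‖(g : Lp ℝ 2 P) - χ S‖ ^ 2)
            * (Nat.choose d k : ℝ) := by field_simp
        _ ≤ ε * (Nat.choose d k : ℝ) := by
            exact mul_le_mul_of_nonneg_right hε (le_of_lt hNpos)
    nlinarith
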